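/- Assume β ≥ γ ≥ α. Then the maximum of T₂ over the interval [0, α/2] equals α + β and is attained at x = α/2, and the minimum of T₂ over [0, α/2] equals α/2 + β and is attained at x = 0. -/

import Mathlib

open Set

noncomputable section

/-- `AR₂(x) = √(β² + (2x − γ)² − 2β(2x − γ)·cos C)`, where
`cos C = (α² + β² − γ²)/(2αβ)` by the Cosine Law. -/
def AR2 (α β γ : ℝ) (x : ℝ) : ℝ :=
  Real.sqrt (β ^ 2 + (2 * x - γ) ^ 2
    - 2 * β * (2 * x - γ) * ((α ^ 2 + β ^ 2 - γ ^ 2) / (2 * α * β)))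

/-- `CR₁(x) = √(β² + (γ − 2x)² − 2β(γ − 2x)·cos A)`, where
`cos A = (β² + γ² − α²)/(2βγ)` by the Cosine Law. -/
def CR1 (α β γ : ℝ) (x : ℝ) : ℝ :=
  Real.sqrt (β ^ 2 + (γ - 2 * x) ^ 2
    - 2 * β * (γ - 2 * x) * ((β ^ 2 + γ ^ 2 - α ^ 2) / (2 * β * γ)))

/-- Worst-case evacuation cost of OppositeSearch in Configuration 1. -/
def T1 (α β γ : ℝ) (x : ℝ) : ℝ :=
  α / 2 + γ - x + max (AR2 α β γ x) (max β (2 * x - γ))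

/-- Worst-case evacuation cost of OppositeSearch in Configuration 2. -/
def T2 (α β γ : ℝ) (x : ℝ) : ℝ :=
  α / 2 + x + max (CR1 α β γ x) (max β (γ - 2 * x))

/-- Case `β ≥ γ ≥ α`, Configuration 2: the maximum of `T₂` over `[0, α/2]` is
`α + β`, attained at `x = α/2`, and the minimum is `α/2 + β`, attained at
`x = 0`. -/
theorem stmt15 (α β γ : ℝ) (hα : 0 < α) (hβ : 0 < β) (hγ : 0 < γ)
    (h1 : α < β + γ) (h2 : β < α + γ) (h3 : γ < α + β)
    (h4 : α ^ 2 ≤ β ^ 2 + γ ^ 2) (h5 : β ^ 2 ≤ α ^ 2 + γ ^ 2)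
    (h6 : γ ^ 2 ≤ α ^ 2 + β ^ 2)
    (hβγ : γ ≤ β) (hγα : α ≤ γ) :
    IsGreatest (T2 α β γ '' Icc 0 (α / 2)) (α + β) ∧
      T2 α β γ (α / 2) = α + β ∧
      IsLeast (T2 α β γ '' Icc 0 (α / 2)) (α / 2 + β) ∧
      T2 α β γ 0 = α / 2 + β := by
  have key : ∀ x ∈ Icc (0:ℝ) (α / 2), T2 α β γ x = α / 2 + x + β := by
    intro x hx
    obtain ⟨hx0, hx2⟩ := hx
    have ht : 0 ≤ γ - 2 * x := by linarith
    have hCR : CR1 α β γ x ≤ β := by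
      have hinner : β ^ 2 + (γ - 2 * x) ^ 2
          - 2 * β * (γ - 2 * x) * ((β ^ 2 + γ ^ 2 - α ^ 2) / (2 * β * γ)) ≤ β ^ 2 := by
        have heq : 2 * β * (γ - 2 * x) * ((β ^ 2 + γ ^ 2 - α ^ 2) / (2 * β * γ))
            = (γ - 2 * x) * (β ^ 2 + γ ^ 2 - α ^ 2) / γ := by
          field_simp
        rw [heq]
        have h7 : (γ - 2 * x) ^ 2 ≤ (γ - 2 * x) * (β ^ 2 + γ ^ 2 - α ^ 2) / γ := by
          rw [le_div_iff₀ hγ]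
          nlinarith [mul_nonneg ht (sub_nonneg.2 (pow_le_pow_left₀ hα.le (le_trans hγα hβγ) 2)),
            mul_nonneg (mul_nonneg ht hγ.le) (show (0:ℝ) ≤ 2 * x by linarith)]
        linarith
      calc CR1 α β γ x ≤ Real.sqrt (β ^ 2) := Real.sqrt_le_sqrt hinner
        _ = β := Real.sqrt_sq hβ.le
    have h1' : γ - 2 * x ≤ β := by linarith
    unfold T2
    rw [max_eq_left h1', max_eq_right hCR]
  have hmem : α / 2 ∈ Icc (0:ℝ) (α/2) := ⟨by linarith, le_refl _⟩
  have hmem0 : (0:ℝ) ∈ Icc (0:ℝ) (α/2) := ⟨le_refl _, by linarith⟩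
  have hT1 : T2 α β γ (α/2) = α + β := by rw [key _ hmem]; ring
  have hT0 : T2 α β γ 0 = α/2 + β := by rw [key _ hmem0]; ring
  refine ⟨⟨⟨α/2, hmem, hT1⟩, ?_⟩, hT1, ⟨⟨0, hmem0, hT0⟩, ?_⟩, hT0⟩
  · rintro y ⟨x, hx, rfl⟩
    rw [key _ hx]; obtain ⟨_, h⟩ := hx; linarith
  · rintro y ⟨x, hx, rfl⟩
    rw [key _ hx]; obtain ⟨h, _⟩ := hx; linarith
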